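/- Let 1 < q < p < ∞ with 1/q = 1/p + 1/r. If w is 𝒜-measurable and M_w maps L^q(𝒜) boundedly into L^p(𝒜), and the 𝒜-atomic part consists of atoms {A_n}, then sup_n |w(A_n)|^r / μ(A_n) < ∞, where w(A_n) denotes the constant value of w on the atom A_n. -/

import Mathlib

open MeasureTheory Filter
open scoped NNReal ENNReal

/-- An atom of `μ`. -/
def IsMeasAtom {X : Type*} [mX : MeasurableSpace X] (μ : MeasureTheory.Measure X)
    (A : Set X) : Prop :=
  MeasurableSet A ∧ 0 < μ A ∧
    ∀ F : Set X, MeasurableSet F → F ⊆ A → μ F = 0 ∨ μ F = μ A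

/-- Let `1 < q < p < ∞` with `1/q = 1/p + 1/r`. If `w` is measurable,
a.e. constant (with value `c n`) on each atom `A n` of the atomic part, and `M_w`
maps `L^q` boundedly into `L^p`, then `sup_n |c n|^r / μ(A n) < ∞`. -/
theorem mult_up_exponent_atoms_sup_finite
    {X : Type*} {mX : MeasurableSpace X} (μ : Measure X) [SigmaFinite μ]
    (p q r : ℝ) (hq : 1 < q) (hqp : q < p) (hr : 1 / p + 1 / r = 1 / q)
    (A : ℕ → Set X)
    (hatom : ∀ n, IsMeasAtom μ (A n))
    (hfin : ∀ n, μ (A n) < ∞)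
    (hdisj : Pairwise (Function.onFun Disjoint A))
    (w : X → ℝ) (hw : Measurable w)
    (c : ℕ → ℝ) (hc : ∀ n, ∀ᵐ x ∂μ, x ∈ A n → w x = c n)
    (C : ℝ≥0)
    (hbdd : ∀ f : X → ℝ, MemLp f (ENNReal.ofReal q) μ →
      eLpNorm (fun x => w x * f x) (ENNReal.ofReal p) μ ≤
        C * eLpNorm f (ENNReal.ofReal q) μ) :
    ∃ M : ℝ, ∀ n, |c n| ^ r / (μ (A n)).toReal ≤ M := by
  have hq0 : (0:ℝ) < q := lt_trans one_pos hq
  have hp0 : (0:ℝ) < p := lt_trans hq0 hqp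
  have hr0 : (0:ℝ) < r := by
    have h1 : 1 / r = 1 / q - 1 / p := by linarith
    have h2 : 0 < 1 / r := by
      rw [h1]
      have := one_div_lt_one_div_of_lt hq0 hqp
      linarith
    exact (one_div_pos.mp h2)
  have hqE : (ENNReal.ofReal q) ≠ 0 := by
    simp [ENNReal.ofReal_eq_zero]; linarith
  have hqT : (ENNReal.ofReal q).toReal = q := ENNReal.toReal_ofReal hq0.le
  have hpE : (ENNReal.ofReal p) ≠ 0 := by
    simp [ENNReal.ofReal_eq_zero]; linarith
  have hpT : (ENNReal.ofReal p).toReal = p := ENNReal.toReal_ofReal hp0.le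
  refine ⟨((C:ℝ)) ^ r, fun n => ?_⟩
  obtain ⟨ms, hpos, -⟩ := hatom n
  set a := μ (A n) with ha
  have haT : 0 < a.toReal := ENNReal.toReal_pos hpos.ne' (hfin n).ne
  -- test function
  set f : X → ℝ := (A n).indicator (fun _ => (1:ℝ)) with hf
  have hmem : MemLp f (ENNReal.ofReal q) μ :=
    memLp_indicator_const _ ms 1 (Or.inr (hfin n).ne)
  have hfq : eLpNorm f (ENNReal.ofReal q) μ = a ^ (1/q) := by
    rw [eLpNorm_indicator_const ms hqE (by simp), hqT]
    simp
    rfl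
  have hwg : (fun x => w x * f x) =ᵐ[μ] (A n).indicator (fun _ => c n) := by
    filter_upwards [hc n] with x hx
    by_cases h : x ∈ A n
    · simp [hf, Set.indicator_of_mem h, hx h]
    · simp [hf, Set.indicator_of_notMem h]
  have hwp : eLpNorm (fun x => w x * f x) (ENNReal.ofReal p) μ
      = (‖c n‖₊ : ℝ≥0∞) * a ^ (1/p) := by
    rw [eLpNorm_congr_ae hwg, eLpNorm_indicator_const ms hpE (by simp), hpT]
    rfl
  have key : (‖c n‖₊ : ℝ≥0∞) * a ^ (1/p) ≤ C * a ^ (1/q) := by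
    rw [← hwp, ← hfq]; exact hbdd f hmem
  have hap0 : a ^ (1/p) ≠ 0 := (ENNReal.rpow_pos hpos (hfin n).ne).ne'
  have hapT : a ^ (1/p) ≠ ∞ := by
    refine ENNReal.rpow_ne_top_of_nonneg (by positivity) (hfin n).ne
  have key2 : (‖c n‖₊ : ℝ≥0∞) ≤ C * a ^ (1/r) := by
    have := ENNReal.div_le_div_right key (a ^ (1/p))
    rwa [mul_div_assoc, mul_div_assoc, ENNReal.div_self hap0 hapT, mul_one,
      ← ENNReal.rpow_sub _ _ hpos.ne' (hfin n).ne,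
      show 1/q - 1/p = 1/r by linarith] at this
  have key3 : (‖c n‖₊ : ℝ≥0∞) ^ r ≤ (C : ℝ≥0∞) ^ r * a := by
    calc (‖c n‖₊ : ℝ≥0∞) ^ r ≤ (C * a ^ (1/r)) ^ r :=
          ENNReal.rpow_le_rpow key2 hr0.le
      _ = (C : ℝ≥0∞) ^ r * a := by
          rw [ENNReal.mul_rpow_of_nonneg _ _ hr0.le, ← ENNReal.rpow_mul,
            one_div_mul_cancel hr0.ne', ENNReal.rpow_one]
  rw [div_le_iff₀ haT]
  have hRHSfin : (C : ℝ≥0∞) ^ r * a ≠ ∞ := by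
    exact ENNReal.mul_ne_top (ENNReal.rpow_ne_top_of_nonneg hr0.le ENNReal.coe_ne_top) (hfin n).ne
  have := ENNReal.toReal_mono hRHSfin key3
  rw [ENNReal.toReal_mul, ← ENNReal.toReal_rpow, ← ENNReal.toReal_rpow,
    ENNReal.coe_toReal, ENNReal.coe_toReal, coe_nnnorm, Real.norm_eq_abs] at this
  exact this
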